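/- Let g(P) = w_s·log₂(1 + Ψ_s·P) + w_w·log₂(1 + Ψ_w·(q−P)/(1 + Ψ_w·P)) on [0, q/2], where Ψ_s ≥ Ψ_w > 0 and w_w/w_s < Ψ_s/Ψ_w with w_s ≠ w_w. Then the derivative of g vanishes at P = Ω := (w_w·Ψ_w − w_s·Ψ_s)/(Ψ_s·Ψ_w·(w_s − w_w)). -/
import Mathlib


/-- The derivative of the direct-link NOMA objective
`g(P) = w_s·log₂(1+Ψ_s P) + w_w·log₂(1 + Ψ_w(q−P)/(1+Ψ_w P))`
vanishes at `P = Ω = (w_w Ψ_w − w_s Ψ_s)/(Ψ_s Ψ_w (w_s − w_w))`. -/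
theorem stmt_4 (Ψs Ψw ws ww q : ℝ) (hΨw : 0 < Ψw) (hΨs : Ψw ≤ Ψs)
    (hws : 0 < ws) (hww : 0 < ww) (hne : ws ≠ ww)
    (hratio : ww / ws < Ψs / Ψw)
    (Ω : ℝ) (hΩ : Ω = (ww * Ψw - ws * Ψs) / (Ψs * Ψw * (ws - ww)))
    (hmem : Ω ∈ Set.Icc 0 (q / 2)) :
    HasDerivAt (fun P : ℝ => ws * Real.logb 2 (1 + Ψs * P) +
      ww * Real.logb 2 (1 + Ψw * (q - P) / (1 + Ψw * P))) 0 Ω := by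
  have hΨs0 : 0 < Ψs := lt_of_lt_of_le hΨw hΨs
  have hΩ0 : 0 ≤ Ω := hmem.1
  have hq : 0 ≤ q := by nlinarith [hmem.2]
  have h1 : 0 < 1 + Ψs * Ω := by positivity
  have h2 : 0 < 1 + Ψw * Ω := by positivity
  have h3 : 0 < 1 + Ψw * q := by positivity
  have hlog2 : Real.log 2 ≠ 0 := by
    exact Real.log_ne_zero_of_pos_of_ne_one (by norm_num) (by norm_num)
  -- auxiliary function equal near Ω
  set g2 : ℝ → ℝ := fun P => ws * Real.logb 2 (1 + Ψs * P) +
      ww * (Real.logb 2 (1 + Ψw * q) - Real.logb 2 (1 + Ψw * P)) with hg2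
  have hopen : IsOpen {P : ℝ | 0 < 1 + Ψw * P} := by
    have : Continuous fun P : ℝ => 1 + Ψw * P := by continuity
    exact isOpen_lt continuous_const this
  have hev : (fun P : ℝ => ws * Real.logb 2 (1 + Ψs * P) +
      ww * Real.logb 2 (1 + Ψw * (q - P) / (1 + Ψw * P))) =ᶠ[nhds Ω] g2 := by
    filter_upwards [hopen.mem_nhds (by simpa using h2)] with P hP
    have hP' : (1 + Ψw * P) ≠ 0 := ne_of_gt hP
    have harg : 1 + Ψw * (q - P) / (1 + Ψw * P) = (1 + Ψw * q) / (1 + Ψw * P) := by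
      field_simp; ring
    rw [harg, Real.logb_div (ne_of_gt h3) hP']
  -- derivative of g2
  have hds : HasDerivAt (fun P : ℝ => Real.logb 2 (1 + Ψs * P))
      (Ψs * 1 / (1 + Ψs * Ω) / Real.log 2) Ω := by
    have := (((hasDerivAt_id Ω).const_mul Ψs).const_add 1).log (ne_of_gt h1)
    exact this.div_const (Real.log 2)
  have hdw : HasDerivAt (fun P : ℝ => Real.logb 2 (1 + Ψw * P))
      (Ψw * 1 / (1 + Ψw * Ω) / Real.log 2) Ω := by
    have := (((hasDerivAt_id Ω).const_mul Ψw).const_add 1).log (ne_of_gt h2)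
    exact this.div_const (Real.log 2)
  have hd : HasDerivAt g2
      (ws * (Ψs * 1 / (1 + Ψs * Ω) / Real.log 2) +
        ww * (0 - Ψw * 1 / (1 + Ψw * Ω) / Real.log 2)) Ω :=
    (hds.const_mul ws).add (((hasDerivAt_const Ω _).sub hdw).const_mul ww)
  have hval : ws * (Ψs * 1 / (1 + Ψs * Ω) / Real.log 2) +
        ww * (0 - Ψw * 1 / (1 + Ψw * Ω) / Real.log 2) = 0 := by
    have hsub : ws - ww ≠ 0 := sub_ne_zero.mpr hne
    have hkey : ws * Ψs * (1 + Ψw * Ω) = ww * Ψw * (1 + Ψs * Ω) := by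
      rw [hΩ]; field_simp; ring
    field_simp
    nlinarith [hkey, Real.log_pos (by norm_num : (1:ℝ) < 2)]
  rw [← hval]
  exact hd.congr_of_eventuallyEq hev
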